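/- The Jacobian of the system ẋ = F(x,y) := x·((T−2P+S) − (T−S)·y)·g(x,y), ẏ = G(x,y) := (1−y)·((T−P)·x − (P−S))·g(x,y), with g(x,y) = y·(1−x)/(1+y−x+y·x)², evaluated at the interior fixed point (x*, y*) = ((P−S)/(T−P), (T−2P+S)/(T−S)), has zero trace and positive determinant; hence its eigenvalues are purely imaginary (the fixed point is a linear center). -/
import Mathlib


noncomputable def gdyn (x y : ℝ) : ℝ := y * (1 - x) / (1 + y - x + y*x)^2

noncomputable def Fdyn (T P S x y : ℝ) : ℝ :=
  x * ((T - 2*P + S) - (T - S) * y) * gdyn x y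

noncomputable def Gdyn (T P S x y : ℝ) : ℝ :=
  (1 - y) * ((T - P) * x - (P - S)) * gdyn x y

lemma charpoly_fin_two' (M : Matrix (Fin 2) (Fin 2) ℂ) :
    M.charpoly = Polynomial.X^2 - Polynomial.C M.trace * Polynomial.X + Polynomial.C M.det := by
  rw [Matrix.charpoly, Matrix.det_fin_two, Matrix.charmatrix_apply_eq,
    Matrix.charmatrix_apply_eq, Matrix.charmatrix_apply_ne _ _ _ (by decide),
    Matrix.charmatrix_apply_ne _ _ _ (by decide), Matrix.trace_fin_two, Matrix.det_fin_two]
  simp only [map_add, map_mul, map_sub]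
  ring

/-- The Jacobian of the exploitation dynamics at the interior fixed point has
zero trace and positive determinant, so its eigenvalues are purely imaginary
(the fixed point is a linear center). -/
theorem pd_fixed_point_is_center (T R P S : ℝ)
    (hTR : T > R) (hRP : R > P) (hPS : P > S) (hsub : T + S > 2*P) :
    let xs : ℝ := (P - S)/(T - P)
    let ys : ℝ := (T - 2*P + S)/(T - S)
    let J : Matrix (Fin 2) (Fin 2) ℝ :=
      !![deriv (fun x => Fdyn T P S x ys) xs, deriv (fun y => Fdyn T P S xs y) ys;
         deriv (fun x => Gdyn T P S x ys) xs, deriv (fun y => Gdyn T P S xs y) ys]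
    J.trace = 0 ∧ 0 < J.det ∧
      ∀ μ : ℂ, (J.map (Complex.ofReal)).charpoly.IsRoot μ → μ.re = 0 := by
  intro xs ys J
  have hTP : (0:ℝ) < T - P := by linarith
  have hTS : (0:ℝ) < T - S := by linarith
  have hPS0 : (0:ℝ) < P - S := by linarith
  have hc : (0:ℝ) < T - 2*P + S := by linarith
  have hxs : xs = (P - S)/(T - P) := rfl
  have hys : ys = (T - 2*P + S)/(T - S) := rfl
  have hxs_pos : 0 < xs := by rw [hxs]; exact div_pos hPS0 hTP
  have hxs_lt : xs < 1 := by rw [hxs]; exact (div_lt_one hTP).2 (by linarith)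
  have hys_pos : 0 < ys := by rw [hys]; exact div_pos hc hTS
  have hys_lt : ys < 1 := by rw [hys]; exact (div_lt_one hTS).2 (by linarith)
  have hD : 0 < 1 + ys - xs + ys*xs := by nlinarith
  have hyfac : (T - 2*P + S) - (T - S) * ys = 0 := by
    rw [hys, mul_div_cancel₀ _ (ne_of_gt hTS)]; ring
  have hxfac : (T - P) * xs - (P - S) = 0 := by
    rw [hxs, mul_div_cancel₀ _ (ne_of_gt hTP)]; ring
  -- diagonal entries vanish
  have e1 : (fun x => Fdyn T P S x ys) = fun _ => (0:ℝ) := by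
    funext x; unfold Fdyn; rw [hyfac]; ring
  have hJ00 : deriv (fun x => Fdyn T P S x ys) xs = 0 := by
    rw [e1]; exact deriv_const _ _
  have e2 : (fun y => Gdyn T P S xs y) = fun _ => (0:ℝ) := by
    funext y; unfold Gdyn; rw [hxfac]; ring
  have hJ11 : deriv (fun y => Gdyn T P S xs y) ys = 0 := by
    rw [e2]; exact deriv_const _ _
  -- the value of g at the fixed point
  set g0 : ℝ := ys * (1 - xs) / (1 + ys - xs + ys*xs)^2 with hg0def
  have hg0 : 0 < g0 := by
    apply div_pos (mul_pos hys_pos (by linarith)) (by positivity)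
  -- derivative of g in y at the fixed point (existence only)
  have hqy : ∃ q', HasDerivAt (fun y : ℝ => y * (1 - xs) / (1 + y - xs + y*xs)^2) q' ys := by
    have hnum : HasDerivAt (fun y : ℝ => y * (1 - xs)) (1 * (1 - xs)) ys :=
      (hasDerivAt_id ys).mul_const (1 - xs)
    have hden0 : HasDerivAt (fun y : ℝ => 1 + y - xs + y*xs) (((0 + 1) - 0) + 1*xs) ys :=
      (((hasDerivAt_const ys 1).add (hasDerivAt_id ys)).sub (hasDerivAt_const ys xs)).add
        ((hasDerivAt_id ys).mul_const xs)
    have hden := hden0.pow 2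
    exact ⟨_, hnum.div hden (pow_ne_zero 2 (ne_of_gt hD))⟩
  obtain ⟨qy, hqy⟩ := hqy
  have hqx : ∃ q', HasDerivAt (fun x : ℝ => ys * (1 - x) / (1 + ys - x + ys*x)^2) q' xs := by
    have hnum : HasDerivAt (fun x : ℝ => ys * (1 - x)) (ys * (0 - 1)) xs :=
      ((hasDerivAt_const xs 1).sub (hasDerivAt_id xs)).const_mul ys
    have hden0 : HasDerivAt (fun x : ℝ => 1 + ys - x + ys*x) (((0 + 0) - 1) + ys*1) xs :=
      (((hasDerivAt_const xs 1).add (hasDerivAt_const xs ys)).sub (hasDerivAt_id xs)).add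
        ((hasDerivAt_id xs).const_mul ys)
    have hden := hden0.pow 2
    exact ⟨_, hnum.div hden (pow_ne_zero 2 (ne_of_gt hD))⟩
  obtain ⟨qx, hqx⟩ := hqx
  -- off-diagonal entries
  have hpy : HasDerivAt (fun y : ℝ => xs * ((T - 2*P + S) - (T - S) * y))
      (xs * (0 - (T - S) * 1)) ys :=
    ((hasDerivAt_const ys (T - 2*P + S)).sub ((hasDerivAt_id ys).const_mul (T - S))).const_mul xs
  have hFy : HasDerivAt (fun y => Fdyn T P S xs y)
      ((xs * (0 - (T - S) * 1)) * (ys * (1 - xs) / (1 + ys - xs + ys*xs)^2)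
        + (xs * ((T - 2*P + S) - (T - S) * ys)) * qy) ys := hpy.mul hqy
  have hJ01 : deriv (fun y => Fdyn T P S xs y) ys = -(xs * (T - S) * g0) := by
    rw [hFy.deriv, hyfac, hg0def]; ring
  have hpx : HasDerivAt (fun x : ℝ => (1 - ys) * ((T - P) * x - (P - S)))
      ((1 - ys) * ((T - P) * 1 - 0)) xs :=
    (((hasDerivAt_id xs).const_mul (T - P)).sub (hasDerivAt_const xs (P - S))).const_mul (1 - ys)
  have hGx : HasDerivAt (fun x => Gdyn T P S x ys)
      (((1 - ys) * ((T - P) * 1 - 0)) * (ys * (1 - xs) / (1 + ys - xs + ys*xs)^2)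
        + ((1 - ys) * ((T - P) * xs - (P - S))) * qx) xs := hpx.mul hqx
  have hJ10 : deriv (fun x => Gdyn T P S x ys) xs = (1 - ys) * (T - P) * g0 := by
    rw [hGx.deriv, hxfac, hg0def]; ring
  have hJ : J = !![0, -(xs * (T - S) * g0); (1 - ys) * (T - P) * g0, 0] := by
    show (!![deriv (fun x => Fdyn T P S x ys) xs, deriv (fun y => Fdyn T P S xs y) ys;
         deriv (fun x => Gdyn T P S x ys) xs, deriv (fun y => Gdyn T P S xs y) ys]) = _
    rw [hJ00, hJ01, hJ10, hJ11]
  have hdet : J.det = (xs * (T - S) * g0) * ((1 - ys) * (T - P) * g0) := by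
    rw [hJ, Matrix.det_fin_two_of]; ring
  have hdetpos : 0 < J.det := by
    rw [hdet]
    have h1 : 0 < 1 - ys := by linarith
    positivity
  refine ⟨?_, hdetpos, ?_⟩
  · rw [hJ, Matrix.trace_fin_two_of]; ring
  · intro μ hμ
    have hM : J.map (Complex.ofReal) =
        !![(0:ℂ), ((-(xs * (T - S) * g0) : ℝ) : ℂ);
           (((1 - ys) * (T - P) * g0 : ℝ) : ℂ), 0] := by
      rw [hJ]
      ext i j
      fin_cases i <;> fin_cases j <;>
        simp [Matrix.map_apply]
    rw [charpoly_fin_two'] at hμ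
    have htr : (J.map (Complex.ofReal)).trace = 0 := by
      rw [hM, Matrix.trace_fin_two_of]; ring
    have hdet' : (J.map (Complex.ofReal)).det = ((J.det : ℝ) : ℂ) := by
      rw [hM, Matrix.det_fin_two_of, hdet]
      push_cast
      ring
    rw [Polynomial.IsRoot.def] at hμ
    simp only [Polynomial.eval_add, Polynomial.eval_sub, Polynomial.eval_mul,
      Polynomial.eval_pow, Polynomial.eval_X, Polynomial.eval_C, htr, hdet'] at hμ
    -- hμ : μ^2 - 0*μ + (J.det : ℂ) = 0
    have hsq : μ^2 = -((J.det : ℝ) : ℂ) := by linear_combination hμ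
    have hre : μ.re^2 - μ.im^2 = -J.det := by
      have := congrArg Complex.re hsq
      simpa [pow_two, Complex.mul_re] using this
    have him : μ.re * μ.im + μ.im * μ.re = 0 := by
      have := congrArg Complex.im hsq
      simpa [pow_two, Complex.mul_im] using this
    by_contra hne
    have him' : μ.im = 0 := by
      rcases mul_eq_zero.1 (by linarith [him] : μ.re * μ.im = 0) with h | h
      · exact absurd h hne
      · exact h
    rw [him'] at hre
    nlinarith [sq_nonneg μ.re]
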